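/- Let U = {u_1, ..., u_n} be a finite universe and E = {x_1, ..., x_m} a finite parameter set, and let Γ_A and Λ_B be two IFS-sets over U with the same parameter set E. Then 0 ≤ S_IFS(Γ_A, Λ_B) ≤ 1. -/

import Mathlib

open scoped Classical

/-- An intuitionistic fuzzy soft set (IFS-set) over a finite universe
`U = {u_1, ..., u_n}` with parameter set `E = {x_1, ..., x_m}`:
membership and non-membership functions `μ, ν : E × U → [0,1]` with
`μ(x_i)(u_j) + ν(x_i)(u_j) ≤ 1`. -/
structure IFSSet (m n : ℕ) where
  mu : Fin m → Fin n → ℝ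
  nu : Fin m → Fin n → ℝ
  mu_nonneg : ∀ i j, 0 ≤ mu i j
  nu_nonneg : ∀ i j, 0 ≤ nu i j
  sum_le_one : ∀ i j, mu i j + nu i j ≤ 1

/-- For each parameter `x_i`, the vector in `ℝ^n` with components
`μ(x_i)(u_j) − ν(x_i)(u_j)`, `j = 1, ..., n`. -/
noncomputable def IFSSet.vec {m n : ℕ} (Γ : IFSSet m n) (i : Fin m) :
    EuclideanSpace ℝ (Fin n) :=
  WithLp.toLp 2 (fun j => Γ.mu i j - Γ.nu i j)

/-- The similarity measure `S_IFS` of two IFS-sets: the ratio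
`(Σ_i |⟨a_i, b_i⟩|) / (Σ_i max(‖a_i‖², ‖b_i‖²))` when some `a_i` or `b_i`
is nonzero, and `1` when all the vectors `a_i` and `b_i` are zero. -/
noncomputable def S_IFS {m n : ℕ} (Γ Λ : IFSSet m n) : ℝ :=
  if (∀ i, Γ.vec i = 0) ∧ (∀ i, Λ.vec i = 0) then 1
  else (∑ i, |(inner ℝ (Γ.vec i) (Λ.vec i) : ℝ)|) /
       (∑ i, max (‖Γ.vec i‖ ^ 2) (‖Λ.vec i‖ ^ 2))

/-- The similarity measure of two IFS-sets lies between 0 and 1: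
`0 ≤ S_IFS(Γ_A, Λ_B) ≤ 1`. -/
theorem S_IFS_mem_Icc {m n : ℕ} (Γ Λ : IFSSet m n) :
    0 ≤ S_IFS Γ Λ ∧ S_IFS Γ Λ ≤ 1 := by
  unfold S_IFS
  split_ifs with h
  · norm_num
  · have hnum : 0 ≤ ∑ i, |(inner ℝ (Γ.vec i) (Λ.vec i) : ℝ)| :=
      Finset.sum_nonneg fun i _ => abs_nonneg _
    have hterm : ∀ i : Fin m, |(inner ℝ (Γ.vec i) (Λ.vec i) : ℝ)| ≤
        max (‖Γ.vec i‖ ^ 2) (‖Λ.vec i‖ ^ 2) := by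
      intro i
      calc |(inner ℝ (Γ.vec i) (Λ.vec i) : ℝ)| ≤ ‖Γ.vec i‖ * ‖Λ.vec i‖ :=
            abs_real_inner_le_norm _ _
        _ ≤ max (‖Γ.vec i‖ ^ 2) (‖Λ.vec i‖ ^ 2) := by
            rcases le_total (‖Γ.vec i‖) (‖Λ.vec i‖) with hle | hle
            · calc ‖Γ.vec i‖ * ‖Λ.vec i‖ ≤ ‖Λ.vec i‖ * ‖Λ.vec i‖ :=
                    mul_le_mul_of_nonneg_right hle (norm_nonneg _)
                _ = ‖Λ.vec i‖ ^ 2 := (sq _).symm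
                _ ≤ _ := le_max_right _ _
            · calc ‖Γ.vec i‖ * ‖Λ.vec i‖ ≤ ‖Γ.vec i‖ * ‖Γ.vec i‖ :=
                    mul_le_mul_of_nonneg_left hle (norm_nonneg _)
                _ = ‖Γ.vec i‖ ^ 2 := (sq _).symm
                _ ≤ _ := le_max_left _ _
    have hden : 0 < ∑ i, max (‖Γ.vec i‖ ^ 2) (‖Λ.vec i‖ ^ 2) := by
      push_neg at h
      rcases Classical.em (∀ i, Γ.vec i = 0) with hA | hA
      · obtain ⟨i, hi⟩ := h hA
        have : 0 < ‖Λ.vec i‖ ^ 2 := by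
          have := norm_pos_iff.mpr hi; positivity
        exact Finset.sum_pos' (fun j _ => le_trans (by positivity) (le_max_left _ _))
          ⟨i, Finset.mem_univ i, lt_of_lt_of_le this (le_max_right _ _)⟩
      · obtain ⟨i, hi⟩ := not_forall.mp hA
        have : 0 < ‖Γ.vec i‖ ^ 2 := by
          have := norm_pos_iff.mpr hi; positivity
        exact Finset.sum_pos' (fun j _ => le_trans (by positivity) (le_max_left _ _))
          ⟨i, Finset.mem_univ i, lt_of_lt_of_le this (le_max_left _ _)⟩
    constructor
    · exact div_nonneg hnum hden.le
    · rw [div_le_one hden]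
      exact Finset.sum_le_sum fun i _ => hterm i
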